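/- arXiv:1912.04809 — 3 statements merged into one kernel-verified Lean document; each statement's English description precedes it below -/
import Mathlib

section
/- For real numbers z_a, z_b, z_c, z_d: min(z_a+z_b, z_c+z_d) − max(|z_a−z_b|, |z_c−z_d|) = min(z_a+z_d, z_b+z_c) − max(|z_a−z_d|, |z_b−z_c|). -/
set_option maxHeartbeats 2000000 in
lemma fiber_key (a b c d : ℝ) :
    min (a + b) (c + d) - max |a - b| |c - d| =
      min (2 * min (min a b) (min c d)) (a + b + c + d - 2 * max (max a b) (max c d)) := by
  rcases abs_cases (a - b) with ⟨h1, h1'⟩ | ⟨h1, h1'⟩ <;>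
  rcases abs_cases (c - d) with ⟨h2, h2'⟩ | ⟨h2, h2'⟩ <;>
  rw [h1, h2] <;>
  simp only [min_def, max_def] <;> split_ifs <;> linarith

theorem fiber_lengths_equal (za zb zc zd : ℝ) :
    min (za + zb) (zc + zd) - max |za - zb| |zc - zd| =
      min (za + zd) (zb + zc) - max |za - zd| |zb - zc| := by
  rw [fiber_key, fiber_key]
  have hmin : min (min za zb) (min zc zd) = min (min za zd) (min zb zc) := by
    rw [min_comm zc zd, min_min_min_comm za zb zd zc]
  have hmax : max (max za zb) (max zc zd) = max (max za zd) (max zb zc) := by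
    rw [max_comm zc zd, max_max_max_comm za zb zd zc]
  rw [hmin, hmax]
  ring_nf
end

section
/- Let I ⊆ ℂ[x₁,…,x_n] be an ideal with generators f₁,…,f_m, and let I^L = I·ℂ[x₁^{±1},…,x_n^{±1}] be its extension to the Laurent polynomial ring. Then for any w ∈ ℚ^n, the initial ideal in_w(I) contains a monomial if and only if in_w(I^L) contains a monomial. -/
open scoped Classical

/-- The Laurent polynomial ring `ℂ[x₁^{±1},…,x_n^{±1}]` as the monoid algebra
of the exponent lattice `ℤⁿ`. -/
abbrev LaurentPoly (n : ℕ) := AddMonoidAlgebra ℂ (Fin n →₀ ℤ)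

/-- The `w`-weight of an exponent vector `u ∈ ℕⁿ`. -/
noncomputable def pwt {n : ℕ} (w : Fin n → ℚ) (u : Fin n →₀ ℕ) : ℚ :=
  ∑ i, w i * (u i : ℚ)

/-- The `w`-weight of an exponent vector `u ∈ ℤⁿ`. -/
noncomputable def lwt {n : ℕ} (w : Fin n → ℚ) (u : Fin n →₀ ℤ) : ℚ :=
  ∑ i, w i * (u i : ℚ)

/-- The initial form of a polynomial: the sum of its terms whose exponent
vector has minimal `w`-weight. -/
noncomputable def pinit {n : ℕ} (w : Fin n → ℚ) (f : MvPolynomial (Fin n) ℂ) :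
    MvPolynomial (Fin n) ℂ :=
  ∑ u ∈ f.support.filter (fun u => ∀ v ∈ f.support, pwt w u ≤ pwt w v),
    MvPolynomial.monomial u (f.coeff u)

/-- The initial form of a Laurent polynomial. -/
noncomputable def linit {n : ℕ} (w : Fin n → ℚ) (h : LaurentPoly n) : LaurentPoly n :=
  ∑ u ∈ h.coeff.support.filter (fun u => ∀ v ∈ h.coeff.support, lwt w u ≤ lwt w v),
    AddMonoidAlgebra.single u (h.coeff u)

/-- The initial ideal `in_w(I)` of an ideal of the polynomial ring. -/
noncomputable def pinitIdeal {n : ℕ} (w : Fin n → ℚ) (I : Ideal (MvPolynomial (Fin n) ℂ)) :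
    Ideal (MvPolynomial (Fin n) ℂ) :=
  Ideal.span {g | ∃ f ∈ I, g = pinit w f}

/-- The initial ideal `in_w(J)` of an ideal of the Laurent polynomial ring. -/
noncomputable def linitIdeal {n : ℕ} (w : Fin n → ℚ) (J : Ideal (LaurentPoly n)) :
    Ideal (LaurentPoly n) :=
  Ideal.span {g | ∃ f ∈ J, g = linit w f}

/-- The inclusion of the polynomial ring into the Laurent polynomial ring,
induced by the inclusion of exponent monoids `ℕⁿ ↪ ℤⁿ`. -/
noncomputable def toLaurent (n : ℕ) : MvPolynomial (Fin n) ℂ →+* LaurentPoly n :=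
  AddMonoidAlgebra.mapDomainRingHom ℂ
    (Finsupp.mapRange.addMonoidHom (Nat.castAddMonoidHom ℤ))

/-! ### Auxiliary material -/

/-- The exponent-lattice inclusion `ℕⁿ → ℤⁿ`. -/
noncomputable abbrev expE {n : ℕ} : (Fin n →₀ ℕ) →+ (Fin n →₀ ℤ) :=
  Finsupp.mapRange.addMonoidHom (Nat.castAddMonoidHom ℤ)

section Aux

variable {n : ℕ}

lemma expE_apply (u : Fin n →₀ ℕ) (i : Fin n) : expE u i = (u i : ℤ) := by
  simp [expE, Finsupp.mapRange.addMonoidHom]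
  rfl

lemma toLaurent_apply' (f : MvPolynomial (Fin n) ℂ) :
    toLaurent n f = AddMonoidAlgebra.mapDomain (⇑(expE (n := n))) f := rfl

lemma toLaurent_coeff (f : MvPolynomial (Fin n) ℂ) :
    AddMonoidAlgebra.coeff (toLaurent n f)
      = Finsupp.mapDomain (⇑(expE (n := n))) (AddMonoidAlgebra.coeff f) := rfl

lemma coeff_mapDomain' {M N : Type*} [AddMonoid M] [AddMonoid N] (f : M → N)
    (x : AddMonoidAlgebra ℂ M) :
    AddMonoidAlgebra.coeff (AddMonoidAlgebra.mapDomain f x)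
      = Finsupp.mapDomain f (AddMonoidAlgebra.coeff x) := rfl

lemma expE_injective : Function.Injective (⇑(expE (n := n))) := by
  intro u v h
  ext i
  have : (u i : ℤ) = (v i : ℤ) := by rw [← expE_apply, ← expE_apply, h]
  exact_mod_cast this

lemma toLaurent_injective : Function.Injective (toLaurent n) := by
  intro f g h
  rw [toLaurent_apply', toLaurent_apply'] at h
  exact AddMonoidAlgebra.mapDomain_injective expE_injective h

lemma toLaurent_monomial (a : Fin n →₀ ℕ) (c : ℂ) :
    toLaurent n (MvPolynomial.monomial a c) = AddMonoidAlgebra.single (expE a) c := by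
  rw [toLaurent_apply', ← MvPolynomial.single_eq_monomial]
  exact AddMonoidAlgebra.mapDomain_single

lemma init_mapDomain {M M' : Type*} (σ : M → M') (hσ : Function.Injective σ)
    (W : M → ℚ) (W' : M' → ℚ) (hW : ∀ u v : M, W' (σ u) ≤ W' (σ v) ↔ W u ≤ W v)
    (h : M →₀ ℂ) :
    ∑ u ∈ (Finsupp.mapDomain σ h).support.filter
        (fun u => ∀ v ∈ (Finsupp.mapDomain σ h).support, W' u ≤ W' v),
      Finsupp.single u (Finsupp.mapDomain σ h u)
    = Finsupp.mapDomain σ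
        (∑ u ∈ h.support.filter (fun u => ∀ v ∈ h.support, W u ≤ W v),
          Finsupp.single u (h u)) := by
  classical
  have hsupp := Finsupp.mapDomain_support_of_injective hσ h
  have key : ((Finsupp.mapDomain σ h).support.filter
        (fun u => ∀ v ∈ (Finsupp.mapDomain σ h).support, W' u ≤ W' v))
      = (h.support.filter (fun u => ∀ v ∈ h.support, W u ≤ W v)).image σ := by
    rw [hsupp, Finset.filter_image]
    congr 1
    apply Finset.filter_congr
    intro u hu
    constructor
    · intro H v hv
      exact (hW u v).mp (H (σ v) (Finset.mem_image_of_mem σ hv))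
    · intro H v hv
      obtain ⟨v', hv', rfl⟩ := Finset.mem_image.mp hv
      exact (hW u v').mpr (H v' hv')
  rw [key, Finset.sum_image (fun x _ y _ hxy => hσ hxy), Finsupp.mapDomain_finset_sum]
  apply Finset.sum_congr rfl
  intro u hu
  rw [Finsupp.mapDomain_single, Finsupp.mapDomain_apply hσ]

variable (w : Fin n → ℚ)

lemma lwt_expE (u : Fin n →₀ ℕ) : lwt w (expE u) = pwt w u := by
  unfold lwt pwt
  apply Finset.sum_congr rfl
  intro i _
  rw [expE_apply]
  push_cast
  ring

lemma lwt_add (a b : Fin n →₀ ℤ) : lwt w (a + b) = lwt w a + lwt w b := by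
  unfold lwt
  rw [← Finset.sum_add_distrib]
  apply Finset.sum_congr rfl
  intro i _
  rw [Finsupp.add_apply]
  push_cast
  ring

lemma linit_toLaurent (f : MvPolynomial (Fin n) ℂ) :
    linit w (toLaurent n f) = toLaurent n (pinit w f) := by
  unfold linit pinit
  simp only [← MvPolynomial.single_eq_monomial]
  apply AddMonoidAlgebra.coeff_injective
  simp only [toLaurent_coeff, AddMonoidAlgebra.coeff_sum, AddMonoidAlgebra.coeff_single]
  exact init_mapDomain _ expE_injective (pwt w) (lwt w)
    (fun u v => by rw [lwt_expE, lwt_expE]) (AddMonoidAlgebra.coeff f)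

lemma single_one_mul_eq_mapDomain (a : Fin n →₀ ℤ) (h : LaurentPoly n) :
    AddMonoidAlgebra.single a (1 : ℂ) * h = AddMonoidAlgebra.mapDomain (fun u => a + u) h := by
  apply AddMonoidAlgebra.coeff_injective
  apply Finsupp.ext
  intro x
  rw [AddMonoidAlgebra.coeff_single_mul_apply, one_mul, coeff_mapDomain']
  have he : (fun u => a + u) = ⇑(Equiv.addLeft a) := rfl
  rw [he, Finsupp.mapDomain_equiv_apply]
  simp

lemma linit_shift (a : Fin n →₀ ℤ) (h : LaurentPoly n) :
    linit w (AddMonoidAlgebra.single a (1 : ℂ) * h)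
      = AddMonoidAlgebra.single a (1 : ℂ) * linit w h := by
  rw [single_one_mul_eq_mapDomain, single_one_mul_eq_mapDomain]
  unfold linit
  apply AddMonoidAlgebra.coeff_injective
  simp only [coeff_mapDomain', AddMonoidAlgebra.coeff_sum, AddMonoidAlgebra.coeff_single]
  exact init_mapDomain _ (add_right_injective a) (lwt w) (lwt w)
    (fun u v => by rw [lwt_add, lwt_add]; exact add_le_add_iff_left _) (AddMonoidAlgebra.coeff h)

end Aux
section Aux2

variable {n : ℕ}

lemma exists_shift_toLaurent (q : LaurentPoly n) :
    ∃ (a : Fin n →₀ ℕ) (s : MvPolynomial (Fin n) ℂ),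
      AddMonoidAlgebra.single (expE a) (1 : ℂ) * q = toLaurent n s := by
  classical
  set a : Fin n →₀ ℕ :=
    Finsupp.equivFunOnFinite.symm (fun i => q.coeff.support.sup (fun u => (-(u i)).toNat)) with ha
  have hnn : ∀ v ∈ (AddMonoidAlgebra.single (expE a) (1 : ℂ) * q).coeff.support, ∀ i, 0 ≤ v i := by
    intro v hv i
    rw [single_one_mul_eq_mapDomain] at hv
    obtain ⟨u, hu, rfl⟩ := Finset.mem_image.mp (Finsupp.mapDomain_support hv)
    rw [Finsupp.add_apply, expE_apply]
    have h1 : (-(u i)).toNat ≤ a i := by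
      rw [ha]
      simpa using Finset.le_sup (f := fun u => (-(u i)).toNat) hu
    have h2 : (-(u i) : ℤ) ≤ (-(u i)).toNat := Int.self_le_toNat _
    omega
  set π : (Fin n →₀ ℤ) → (Fin n →₀ ℕ) :=
    fun v => Finsupp.mapRange Int.toNat (by simp) v with hπ
  refine ⟨a, AddMonoidAlgebra.mapDomain π (AddMonoidAlgebra.single (expE a) (1 : ℂ) * q), ?_⟩
  apply AddMonoidAlgebra.coeff_injective
  rw [toLaurent_coeff, coeff_mapDomain', ← Finsupp.mapDomain_comp]
  conv_lhs => rw [← Finsupp.mapDomain_id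
    (v := AddMonoidAlgebra.coeff (AddMonoidAlgebra.single (expE a) (1 : ℂ) * q))]
  apply Finsupp.mapDomain_congr
  intro v hv
  ext i
  simp only [Function.comp_apply, id_eq, expE_apply, hπ, Finsupp.mapRange_apply]
  exact (Int.toNat_of_nonneg (hnn v hv i)).symm

lemma exists_monomial_mul_mem (J : Ideal (MvPolynomial (Fin n) ℂ)) (z : LaurentPoly n)
    (hz : z ∈ Ideal.map (toLaurent n) J) :
    ∃ (a : Fin n →₀ ℕ) (r : MvPolynomial (Fin n) ℂ), r ∈ J ∧
      toLaurent n (MvPolynomial.monomial a 1) * z = toLaurent n r := by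
  rw [Ideal.map] at hz
  refine Submodule.span_induction ?_ ?_ ?_ ?_ hz
  · rintro x ⟨f, hf, rfl⟩
    refine ⟨0, f, hf, ?_⟩
    rw [MvPolynomial.monomial_zero', map_one, map_one, one_mul]
  · exact ⟨0, 0, zero_mem _, by rw [mul_zero, map_zero]⟩
  · rintro x y _ _ ⟨a₁, r₁, h₁, e₁⟩ ⟨a₂, r₂, h₂, e₂⟩
    refine ⟨a₁ + a₂, MvPolynomial.monomial a₂ 1 * r₁ + MvPolynomial.monomial a₁ 1 * r₂,
      add_mem (Ideal.mul_mem_left _ _ h₁) (Ideal.mul_mem_left _ _ h₂), ?_⟩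
    have hm : (MvPolynomial.monomial (a₁ + a₂) (1 : ℂ))
        = MvPolynomial.monomial a₂ 1 * MvPolynomial.monomial a₁ 1 := by
      simp [MvPolynomial.monomial_mul, add_comm]
    rw [hm, map_mul, mul_add, mul_assoc, e₁, mul_comm (toLaurent n (MvPolynomial.monomial a₂ 1))
      (toLaurent n (MvPolynomial.monomial a₁ 1)), mul_assoc, e₂, ← map_mul, ← map_mul, ← map_add]
  · rintro q x _ ⟨a₁, r₁, h₁, e₁⟩
    obtain ⟨c, s, hc⟩ := exists_shift_toLaurent q
    refine ⟨c + a₁, s * r₁, Ideal.mul_mem_left _ _ h₁, ?_⟩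
    have hm : (MvPolynomial.monomial (c + a₁) (1 : ℂ))
        = MvPolynomial.monomial c 1 * MvPolynomial.monomial a₁ 1 := by
      simp [MvPolynomial.monomial_mul]
    rw [smul_eq_mul, hm, map_mul, mul_mul_mul_comm, toLaurent_monomial, hc, e₁, ← map_mul]

end Aux2
section Aux3

variable {n : ℕ} (w : Fin n → ℚ)

lemma linitIdeal_map (I : Ideal (MvPolynomial (Fin n) ℂ)) :
    linitIdeal w (Ideal.map (toLaurent n) I) = Ideal.map (toLaurent n) (pinitIdeal w I) := by
  apply le_antisymm
  · unfold linitIdeal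
    rw [Ideal.span_le]
    rintro g ⟨e, he, rfl⟩
    rw [SetLike.mem_coe]
    obtain ⟨a, r, hr, hre⟩ := exists_monomial_mul_mem I e he
    rw [toLaurent_monomial] at hre
    have h1 : AddMonoidAlgebra.single (expE a) (1 : ℂ) * linit w e
        = toLaurent n (pinit w r) := by
      rw [← linit_shift, hre, linit_toLaurent]
    have h2 : linit w e
        = AddMonoidAlgebra.single (-(expE a)) (1 : ℂ) * toLaurent n (pinit w r) := by
      rw [← h1, ← mul_assoc, AddMonoidAlgebra.single_mul_single, neg_add_cancel, one_mul,
        ← AddMonoidAlgebra.one_def, one_mul]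
    rw [h2]
    exact Ideal.mul_mem_left _ _
      (Ideal.mem_map_of_mem _ (Ideal.subset_span ⟨r, hr, rfl⟩))
  · rw [Ideal.map_le_iff_le_comap]
    unfold pinitIdeal
    rw [Ideal.span_le]
    rintro g ⟨f, hf, rfl⟩
    rw [SetLike.mem_coe, Ideal.mem_comap, ← linit_toLaurent]
    exact Ideal.subset_span ⟨toLaurent n f, Ideal.mem_map_of_mem _ hf, rfl⟩

end Aux3

/-- Let `I` be a finitely generated ideal of `ℂ[x₁,…,x_n]` and
`I^L = I·ℂ[x₁^{±1},…,x_n^{±1}]` its extension to the Laurent polynomial ring.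
For any `w ∈ ℚⁿ`, `in_w(I)` contains a monomial iff `in_w(I^L)` does. -/
theorem pinitIdeal_has_monomial_iff_linitIdeal (n : ℕ)
    (I : Ideal (MvPolynomial (Fin n) ℂ)) (hI : I.FG) (w : Fin n → ℚ) :
    (∃ u : Fin n →₀ ℕ, MvPolynomial.monomial u (1 : ℂ) ∈ pinitIdeal w I) ↔
      (∃ u : Fin n →₀ ℤ, AddMonoidAlgebra.single u (1 : ℂ) ∈
        linitIdeal w (Ideal.map (toLaurent n) I)) := by
  constructor
  · rintro ⟨u, hu⟩
    refine ⟨expE u, ?_⟩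
    rw [linitIdeal_map]
    have := Ideal.mem_map_of_mem (toLaurent n) hu
    rwa [toLaurent_monomial] at this
  · rintro ⟨u, hu⟩
    rw [linitIdeal_map] at hu
    classical
    set b : Fin n →₀ ℕ := Finsupp.equivFunOnFinite.symm (fun i => (-(u i)).toNat) with hb
    set m' : Fin n →₀ ℕ :=
      Finsupp.equivFunOnFinite.symm (fun i => (u i + ((-(u i)).toNat : ℤ)).toNat) with hm'
    have hm : expE m' = expE b + u := by
      ext i
      rw [Finsupp.add_apply, expE_apply, expE_apply, hb, hm']
      simp only [Finsupp.coe_equivFunOnFinite_symm]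
      omega
    have hmem : AddMonoidAlgebra.single (expE m') (1 : ℂ)
        ∈ Ideal.map (toLaurent n) (pinitIdeal w I) := by
      rw [hm, show (1 : ℂ) = 1 * 1 by ring, ← AddMonoidAlgebra.single_mul_single]
      exact Ideal.mul_mem_left _ _ hu
    rw [← toLaurent_monomial] at hmem
    obtain ⟨a, r, hr, he⟩ := exists_monomial_mul_mem (pinitIdeal w I) _ hmem
    rw [← map_mul] at he
    have h2 := toLaurent_injective he
    have h3 : MvPolynomial.monomial (a + m') (1 : ℂ) = r := by
      rw [← h2]
      simp [MvPolynomial.monomial_mul]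
    exact ⟨a + m', h3 ▸ hr⟩
end

section
/- For nonnegative reals a_{IJ}, a_{IK}, a_{IL}, a_{JK}, a_{JL}, a_{KL}, set z_a = a_{IJ}+a_{IK}+a_{IL}, z_b = a_{IJ}+a_{JK}+a_{JL}, z_c = a_{IK}+a_{JK}+a_{KL}, z_d = a_{IL}+a_{JL}+a_{KL}, and z = a_{IK}+a_{IL}+a_{JK}+a_{JL}. Then −z + min(z_a+z_d, z_b+z_c) + max(|z_a−z_b|, |z_c−z_d|) = a_{IJ} + |a_{IK} − a_{JL}| + a_{KL}. -/
lemma max_abs_add_sub (x y : ℝ) : max |x + y| |x - y| = |x| + |y| := by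
  rcases le_total 0 x with hx | hx <;> rcases le_total 0 y with hy | hy
  · rw [abs_of_nonneg hx, abs_of_nonneg hy, abs_of_nonneg (by linarith : (0:ℝ) ≤ x + y),
      max_eq_left (by rw [abs_le]; constructor <;> linarith)]
  · rw [abs_of_nonneg hx, abs_of_nonpos hy, abs_of_nonneg (by linarith : (0:ℝ) ≤ x - y),
      max_eq_right (by rw [abs_le]; constructor <;> linarith)]
    ring
  · rw [abs_of_nonpos hx, abs_of_nonneg hy, abs_of_nonpos (by linarith : x - y ≤ 0),
      max_eq_right (by rw [abs_le]; constructor <;> linarith)]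
    ring
  · rw [abs_of_nonpos hx, abs_of_nonpos hy, abs_of_nonpos (by linarith : x + y ≤ 0),
      max_eq_left (by rw [abs_le]; constructor <;> linarith)]
    ring

theorem flip_last_coordinate (aIJ aIK aIL aJK aJL aKL : ℝ)
    (h1 : 0 ≤ aIJ) (h2 : 0 ≤ aIK) (h3 : 0 ≤ aIL)
    (h4 : 0 ≤ aJK) (h5 : 0 ≤ aJL) (h6 : 0 ≤ aKL) :
    let za := aIJ + aIK + aIL
    let zb := aIJ + aJK + aJL
    let zc := aIK + aJK + aKL
    let zd := aIL + aJL + aKL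
    let z := aIK + aIL + aJK + aJL
    (-z) + min (za + zd) (zb + zc) + max |za - zb| |zc - zd| =
      aIJ + |aIK - aJL| + aKL := by
  intro za zb zc zd z
  have hab : za - zb = (aIK - aJL) + (aIL - aJK) := by simp only [za, zb]; ring
  have hcd : zc - zd = (aIK - aJL) - (aIL - aJK) := by simp only [zc, zd]; ring
  rw [hab, hcd, max_abs_add_sub]
  rcases le_total aIL aJK with h | h
  · rw [min_eq_left (by simp only [za, zb, zc, zd]; linarith),
      abs_of_nonpos (by linarith : aIL - aJK ≤ 0)]
    simp only [za, zd, z]; ring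
  · rw [min_eq_right (by simp only [za, zb, zc, zd]; linarith),
      abs_of_nonneg (by linarith : 0 ≤ aIL - aJK)]
    simp only [zb, zc, z]; ring
end
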